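/- Let X and Y be finite sets with Z = X ∩ Y and Q = X ∪ Y. Let A ∈ ℝ^{X×X} and B ∈ ℝ^{Y×Y} be symmetric positive definite matrices whose Z×Z submatrices are both equal to C ∈ ℝ^{Z×Z}. Let Ã, B̃, C̃ ∈ ℝ^{Q×Q} be obtained from A^{-1}, B^{-1}, C^{-1} by extending with zeros, and set D := (Ã + B̃ - C̃)^{-1}. Then D is positive definite. -/

import Mathlib

open Matrix

variable {Q : Type*} [Fintype Q] [DecidableEq Q]

/-- Zero-extension of a matrix indexed by a finset `X ⊆ Q` to a `Q × Q` matrix. -/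
def zeroExtend {X : Finset Q} (A : Matrix X X ℝ) : Matrix Q Q ℝ :=
  Matrix.of fun p q =>
    if hp : p ∈ X then if hq : q ∈ X then A ⟨p, hp⟩ ⟨q, hq⟩ else 0 else 0

section helpers

variable {m n : Type*} [Fintype m] [Fintype n] [DecidableEq m] [DecidableEq n]

/-- zero extension of a vector along an injection -/
def vext (e : n → m) (u : n → ℝ) : m → ℝ := fun i => ∑ j, if e j = i then u j else 0

lemma vext_apply (e : n → m) (he : Function.Injective e) (u : n → ℝ) (j : n) :
    vext e u (e j) = u j := by
  simp [vext, he.eq_iff]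

lemma vext_dot (e : n → m) (u : n → ℝ) (w : m → ℝ) :
    vext e u ⬝ᵥ w = u ⬝ᵥ (w ∘ e) := by
  simp only [vext, dotProduct, Finset.sum_mul, ite_mul, zero_mul, Function.comp]
  rw [Finset.sum_comm]
  simp

lemma mulVec_vext (M : Matrix m m ℝ) (e : n → m) (u : n → ℝ) :
    M *ᵥ vext e u = (M.submatrix id e) *ᵥ u := by
  funext i
  simp only [vext, mulVec, dotProduct, submatrix_apply, id_eq, Finset.mul_sum, mul_ite, mul_zero]
  rw [Finset.sum_comm]
  simp

lemma vext_quad (M : Matrix m m ℝ) (e : n → m) (u : n → ℝ) :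
    vext e u ⬝ᵥ M *ᵥ vext e u = u ⬝ᵥ (M.submatrix e e) *ᵥ u := by
  rw [mulVec_vext, vext_dot]
  have h : (M.submatrix id e *ᵥ u) ∘ e = M.submatrix e e *ᵥ u := by
    funext j
    simp [mulVec, dotProduct]
  rw [h]

lemma vext_ne_zero (e : n → m) (he : Function.Injective e) {u : n → ℝ} (hu : u ≠ 0) :
    vext e u ≠ 0 := by
  obtain ⟨j, hj⟩ := Function.ne_iff.mp hu
  intro h
  exact hj (by simpa [vext_apply e he] using congrFun h (e j))

lemma posDef_submatrix (M : Matrix m m ℝ) (hM : M.PosDef) (e : n → m)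
    (he : Function.Injective e) : (M.submatrix e e).PosDef := by
  refine .of_dotProduct_mulVec_pos (hM.1.submatrix e) fun x hx => ?_
  have h := hM.dotProduct_mulVec_pos (vext_ne_zero e he hx)
  simpa [vext_quad] using h

lemma key_ineq (M : Matrix m m ℝ) (hM : M.PosDef) (e : n → m)
    (he : Function.Injective e) (w : m → ℝ) :
    (w ∘ e) ⬝ᵥ (M.submatrix e e)⁻¹ *ᵥ (w ∘ e) ≤ w ⬝ᵥ M⁻¹ *ᵥ w := by
  have hC : (M.submatrix e e).PosDef := posDef_submatrix M hM e he
  set C := M.submatrix e e with hCdef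
  set u : n → ℝ := C⁻¹ *ᵥ (w ∘ e) with hu
  set s : m → ℝ := M⁻¹ *ᵥ w with hs
  have hMdet : IsUnit M.det := isUnit_iff_ne_zero.mpr (ne_of_gt hM.det_pos)
  have hCdet : IsUnit C.det := isUnit_iff_ne_zero.mpr (ne_of_gt hC.det_pos)
  have h1 : M *ᵥ s = w := by
    rw [hs, mulVec_mulVec, Matrix.mul_nonsing_inv M hMdet, one_mulVec]
  have h2 : C *ᵥ u = w ∘ e := by
    rw [hu, mulVec_mulVec, Matrix.mul_nonsing_inv C hCdet, one_mulVec]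
  have hsymm : Mᵀ = M := hM.1
  -- expand the quadratic form of the residual
  have hq : 0 ≤ (s - vext e u) ⬝ᵥ M *ᵥ (s - vext e u) := by
    have := hM.posSemidef.dotProduct_mulVec_nonneg (s - vext e u)
    simpa using this
  have e1 : s ⬝ᵥ M *ᵥ s = w ⬝ᵥ M⁻¹ *ᵥ w := by
    rw [h1]; rw [dotProduct_comm]
  have e2 : vext e u ⬝ᵥ M *ᵥ s = u ⬝ᵥ (w ∘ e) := by
    rw [h1, vext_dot]
  have e3 : s ⬝ᵥ M *ᵥ vext e u = u ⬝ᵥ (w ∘ e) := by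
    rw [dotProduct_mulVec, ← mulVec_transpose, hsymm, h1, dotProduct_comm, vext_dot]
  have e4 : vext e u ⬝ᵥ M *ᵥ vext e u = u ⬝ᵥ (w ∘ e) := by
    rw [vext_quad, ← hCdef, h2]
  have e5 : (w ∘ e) ⬝ᵥ C⁻¹ *ᵥ (w ∘ e) = u ⬝ᵥ (w ∘ e) := by
    rw [← hu, dotProduct_comm]
  have expand : (s - vext e u) ⬝ᵥ M *ᵥ (s - vext e u)
      = w ⬝ᵥ M⁻¹ *ᵥ w - u ⬝ᵥ (w ∘ e) := by
    rw [mulVec_sub, sub_dotProduct, dotProduct_sub, dotProduct_sub, e1, e2, e3, e4]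
    ring
  rw [expand] at hq
  rw [e5]
  linarith

end helpers

lemma zeroExtend_isHermitian {X : Finset Q} {M : Matrix X X ℝ}
    (h : M.IsHermitian) : (zeroExtend M).IsHermitian := by
  ext p q
  by_cases hp : p ∈ X <;> by_cases hq : q ∈ X <;>
    simp [zeroExtend, hp, hq, conjTranspose_apply]
  exact (h.apply ⟨q, hq⟩ ⟨p, hp⟩).symm

lemma dot_zeroExtend {X : Finset Q} (M : Matrix X X ℝ) (v : Q → ℝ) :
    v ⬝ᵥ (zeroExtend M) *ᵥ v = (fun x : X => v x) ⬝ᵥ M *ᵥ (fun x : X => v x) := by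
  have hsub : ∀ (g : Q → ℝ), (∀ p ∉ X, g p = 0) → ∑ p, g p = ∑ x : X, g x.val := by
    intro g hg
    rw [Finset.sum_coe_sort X g]
    exact (Finset.sum_subset (Finset.subset_univ X) fun p _ hp => hg p hp).symm
  simp only [dotProduct, mulVec]
  rw [hsub (fun p => v p * ∑ q, (zeroExtend M) p q * v q)
    (fun p hp => by simp [zeroExtend, hp])]
  refine Finset.sum_congr rfl fun x _ => ?_
  rw [hsub (fun q => (zeroExtend M) x.val q * v q) (fun q hq => by simp [zeroExtend, hq])]
  congr 1
  refine Finset.sum_congr rfl fun y _ => ?_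
  simp [zeroExtend, x.2, y.2]

/-- The conditionally independent coupling `D = (Ã + B̃ - C̃)⁻¹` of two positive
definite matrices `A`, `B` agreeing on `Z = X ∩ Y` is positive definite. -/
theorem coupling_posDef (X Y : Finset Q) (hQ : X ∪ Y = Finset.univ)
    (A : Matrix X X ℝ) (B : Matrix Y Y ℝ)
    (C : Matrix (X ∩ Y : Finset Q) (X ∩ Y : Finset Q) ℝ)
    (hA : A.PosDef) (hB : B.PosDef)
    (hAC : ∀ i j : (X ∩ Y : Finset Q),
      A ⟨i, Finset.mem_of_mem_inter_left i.2⟩ ⟨j, Finset.mem_of_mem_inter_left j.2⟩ = C i j)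
    (hBC : ∀ i j : (X ∩ Y : Finset Q),
      B ⟨i, Finset.mem_of_mem_inter_right i.2⟩ ⟨j, Finset.mem_of_mem_inter_right j.2⟩ = C i j) :
    (zeroExtend A⁻¹ + zeroExtend B⁻¹ - zeroExtend C⁻¹)⁻¹.PosDef := by
  set eX : (X ∩ Y : Finset Q) → X := fun i => ⟨i, Finset.mem_of_mem_inter_left i.2⟩ with heXdef
  set eY : (X ∩ Y : Finset Q) → Y := fun i => ⟨i, Finset.mem_of_mem_inter_right i.2⟩ with heYdef
  have heX : Function.Injective eX := fun i j h => Subtype.ext (congrArg (Subtype.val : X → Q) h)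
  have heY : Function.Injective eY := fun i j h => Subtype.ext (congrArg (Subtype.val : Y → Q) h)
  have hCA : A.submatrix eX eX = C := by
    ext i j; exact hAC i j
  have hCB : B.submatrix eY eY = C := by
    ext i j; exact hBC i j
  have hMpd : (zeroExtend A⁻¹ + zeroExtend B⁻¹ - zeroExtend C⁻¹).PosDef := by
    refine posDef_iff_dotProduct_mulVec.mpr ⟨?_, ?_⟩
    · have h1 := zeroExtend_isHermitian hA.inv.1
      have h2 := zeroExtend_isHermitian hB.inv.1
      have h3 := zeroExtend_isHermitian (hCA ▸ (posDef_submatrix A hA eX heX)).inv.1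
      exact (h1.add h2).sub h3
    · intro v hv
      have hquad : star v ⬝ᵥ (zeroExtend A⁻¹ + zeroExtend B⁻¹ - zeroExtend C⁻¹) *ᵥ v
          = (fun x : X => v x) ⬝ᵥ A⁻¹ *ᵥ (fun x : X => v x)
            + (fun y : Y => v y) ⬝ᵥ B⁻¹ *ᵥ (fun y : Y => v y)
            - (fun z : (X ∩ Y : Finset Q) => v z) ⬝ᵥ C⁻¹ *ᵥ
              (fun z : (X ∩ Y : Finset Q) => v z) := by
        simp only [star_trivial, add_mulVec, sub_mulVec, dotProduct_add, dotProduct_sub]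
        rw [dot_zeroExtend, dot_zeroExtend, dot_zeroExtend]
      have hkA : (fun z : (X ∩ Y : Finset Q) => v z) ⬝ᵥ C⁻¹ *ᵥ
            (fun z : (X ∩ Y : Finset Q) => v z)
          ≤ (fun x : X => v x) ⬝ᵥ A⁻¹ *ᵥ (fun x : X => v x) := by
        have := key_ineq A hA eX heX (fun x : X => v x)
        rw [hCA] at this
        exact this
      have hkB : (fun z : (X ∩ Y : Finset Q) => v z) ⬝ᵥ C⁻¹ *ᵥ
            (fun z : (X ∩ Y : Finset Q) => v z)
          ≤ (fun y : Y => v y) ⬝ᵥ B⁻¹ *ᵥ (fun y : Y => v y) := by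
        have := key_ineq B hB eY heY (fun y : Y => v y)
        rw [hCB] at this
        exact this
      obtain ⟨p, hp⟩ := Function.ne_iff.mp hv
      have hpXY : p ∈ X ∪ Y := hQ ▸ Finset.mem_univ p
      rw [hquad]
      rcases Finset.mem_union.mp hpXY with hpX | hpY
      · have hvX : (fun x : X => v x) ≠ 0 :=
          Function.ne_iff.mpr ⟨⟨p, hpX⟩, hp⟩
        have hpos : 0 < (fun x : X => v x) ⬝ᵥ A⁻¹ *ᵥ (fun x : X => v x) := by
          have := hA.inv.dotProduct_mulVec_pos hvX
          simpa using this
        linarith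
      · have hvY : (fun y : Y => v y) ≠ 0 :=
          Function.ne_iff.mpr ⟨⟨p, hpY⟩, hp⟩
        have hpos : 0 < (fun y : Y => v y) ⬝ᵥ B⁻¹ *ᵥ (fun y : Y => v y) := by
          have := hB.inv.dotProduct_mulVec_pos hvY
          simpa using this
        linarith
  exact hMpd.inv
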